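/- Let G = (V, E, W) be a finite connected weighted graph and fix an integer k ≥ 1. If T is a spanning tree of G minimizing the total weight Σ_{e ∈ T} W(e) among all spanning trees of G, then T also minimizes the total weight Σ_{e ∈ T} τ_k(e) among all spanning trees of G, where τ_k is the k-cluster filtration computed in G. That is, a minimum spanning tree for the weights W is a minimum spanning tree for the weights τ_k, for every k. -/

import Mathlib

open ENNReal

variable {V : Type*}

/-- The sublevel graph `G*_t`: edges of `G` with weight at most `t`. -/
def sublevel (G : SimpleGraph V) (W : Sym2 V → NNReal) (t : ℝ≥0∞) : SimpleGraph V where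
  Adj u v := G.Adj u v ∧ (W s(u, v) : ℝ≥0∞) ≤ t
  symm := by
    constructor
    intro u v h
    exact ⟨h.1.symm, by rw [Sym2.eq_swap]; exact h.2⟩
  loopless := ⟨fun v h => G.loopless.irrefl v h.1⟩

/-- `N_t(v)`: the number of vertices in the connected component of `v` in `G*_t`. -/
noncomputable def clusterSize (G : SimpleGraph V) (W : Sym2 V → NNReal) (t : ℝ≥0∞) (v : V) : ℕ :=
  Set.ncard {u | (sublevel G W t).Reachable v u}

/-- `τ_k(v) = inf {t : N_t(v) ≥ k}`, the `k`-cluster filtration value of a vertex. -/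
noncomputable def tauV (G : SimpleGraph V) (W : Sym2 V → NNReal) (k : ℕ) (v : V) : ℝ≥0∞ :=
  sInf {t : ℝ≥0∞ | k ≤ clusterSize G W t v}

/-- `τ_k(e) = max (τ_k(u), τ_k(v), W(e))`, the `k`-cluster filtration value of an edge. -/
noncomputable def tauEdge (G : SimpleGraph V) (W : Sym2 V → NNReal) (k : ℕ) : Sym2 V → ℝ≥0∞ :=
  Sym2.lift ⟨fun u v => max (max (tauV G W k u) (tauV G W k v)) (W s(u, v)),
    by intro u v; simp only []; rw [max_comm (tauV G W k u), Sym2.eq_swap]⟩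

open SimpleGraph

section Aux

variable {G : SimpleGraph V} {W : Sym2 V → NNReal} {k : ℕ}

lemma tauEdge_mk (x y : V) :
    tauEdge G W k s(x, y) = (tauV G W k x ⊔ tauV G W k y) ⊔ (W s(x, y) : ℝ≥0∞) := rfl

lemma sublevel_mono {s t : ℝ≥0∞} (h : s ≤ t) : sublevel G W s ≤ sublevel G W t :=
  fun _ _ hx => And.intro hx.1 (hx.2.trans h)

lemma reach_sublevel_of_walk {T : SimpleGraph V} (hTG : T ≤ G) {u a : V} (q : T.Walk u a)
    {c : ℝ≥0∞} (hq : ∀ g ∈ q.edges, (W g : ℝ≥0∞) ≤ c) :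
    (sublevel G W c).Reachable u a := by
  induction q with
  | nil => exact Reachable.refl _
  | @cons a b w h p ih =>
    have hadj : (sublevel G W c).Adj a b := And.intro (hTG h) (hq _ (by simp))
    exact hadj.reachable.trans (ih fun g hg => hq g (by simp [hg]))

lemma tauV_le_of_walk [Fintype V] {T : SimpleGraph V} (hTG : T ≤ G) {u a : V} (q : T.Walk u a)
    {c : ℝ≥0∞} (hq : ∀ g ∈ q.edges, (W g : ℝ≥0∞) ≤ c) :
    tauV G W k a ≤ tauV G W k u ⊔ c := by
  unfold tauV
  rw [sInf_sup_eq]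
  refine le_iInf₂ fun s hs => sInf_le ?_
  have hr : (sublevel G W (s ⊔ c)).Reachable u a :=
    reach_sublevel_of_walk hTG q fun g hg => (hq g hg).trans le_sup_right
  have hsub : {x | (sublevel G W s).Reachable u x}
      ⊆ {x | (sublevel G W (s ⊔ c)).Reachable a x} :=
    fun x hx => hr.symm.trans (Reachable.mono (sublevel_mono le_sup_left) hx)
  calc (k : ℕ) ≤ clusterSize G W s u := hs
    _ ≤ clusterSize G W (s ⊔ c) a := Set.ncard_le_ncard hsub (Set.toFinite _)

lemma reach_or_reach_of_walk {T : SimpleGraph V} {x y w : V} (q : T.Walk w x) :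
    (T.deleteEdges {s(x, y)}).Reachable w x ∨ (T.deleteEdges {s(x, y)}).Reachable w y := by
  classical
  induction q with
  | nil => exact Or.inl (Reachable.refl _)
  | @cons a b c h p ih =>
    by_cases he : s(a, b) = s(c, y)
    · rw [Sym2.eq_iff] at he
      rcases he with ⟨rfl, rfl⟩ | ⟨rfl, rfl⟩
      · exact Or.inl (Reachable.refl _)
      · exact Or.inr (Reachable.refl _)
    · have hadj : (T.deleteEdges {s(c, y)}).Adj a b := by
        rw [deleteEdges_adj]
        exact ⟨h, by simpa using he⟩
      rcases ih with h1 | h1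
      · exact Or.inl (hadj.reachable.trans h1)
      · exact Or.inr (hadj.reachable.trans h1)

lemma not_reachable_deleteEdges_of_mem_path_edges {T : SimpleGraph V} (hT : T.IsAcyclic)
    {u v x y : V} {p : T.Walk u v} (hp : p.IsPath) (hg : s(x, y) ∈ p.edges) :
    ¬ (T.deleteEdges {s(x, y)}).Reachable u v := by
  classical
  rintro ⟨q⟩
  have hsub : ∀ e ∈ q.edges, e ∈ T.edgeSet := fun e he => by
    have h1 := q.edges_subset_edgeSet he
    rw [edgeSet_deleteEdges] at h1
    exact h1.1
  have hpaths := hT.path_unique ⟨p, hp⟩ (q.transfer T hsub).toPath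
  have hmem : s(x, y) ∈ ((q.transfer T hsub).toPath : T.Walk u v).edges := by
    have := congrArg Subtype.val hpaths
    simp only at this
    rw [← this]
    exact hg
  have hmem2 := (q.transfer T hsub).edges_toPath_subset hmem
  rw [Walk.edges_transfer] at hmem2
  have := q.edges_subset_edgeSet hmem2
  rw [edgeSet_deleteEdges] at this
  exact this.2 rfl

lemma replacement {T : SimpleGraph V} (hT : T.IsTree) {x y a b : V} (hxy : T.Adj x y)
    (ha : (T.deleteEdges {s(x, y)}).Reachable x a)
    (hb : (T.deleteEdges {s(x, y)}).Reachable y b) :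
    (T.deleteEdges {s(x, y)} ⊔ SimpleGraph.fromEdgeSet {s(a, b)}).IsTree ∧
    a ≠ b ∧ s(a, b) ∉ T.edgeSet \ {s(x, y)} ∧
    (T.deleteEdges {s(x, y)} ⊔ SimpleGraph.fromEdgeSet {s(a, b)}).edgeSet
      = (T.edgeSet \ {s(x, y)}) ∪ {s(a, b)} := by
  set H := T.deleteEdges {s(x, y)} with hH
  set N := H ⊔ SimpleGraph.fromEdgeSet {s(a, b)} with hN
  have hbr : ¬ H.Reachable x y := by
    have h1 : T.IsBridge s(x, y) := isAcyclic_iff_forall_adj_isBridge.mp hT.2 hxy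
    rw [isBridge_iff] at h1
    exact h1
  have hne : a ≠ b := by rintro rfl; exact hbr (ha.trans hb.symm)
  have hnr : ¬ H.Reachable a b := fun h => hbr (ha.trans (h.trans hb.symm))
  have hnadj : ¬ H.Adj a b := fun h => hnr h.reachable
  have hnmem : s(a, b) ∉ T.edgeSet \ {s(x, y)} := by
    rw [← edgeSet_deleteEdges]
    exact fun h => hnadj (H.mem_edgeSet.mp h)
  have hNadj : N.Adj a b := Or.inr ((fromEdgeSet_adj _).mpr ⟨rfl, hne⟩)
  have hedgeSet : N.edgeSet = (T.edgeSet \ {s(x, y)}) ∪ {s(a, b)} := by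
    rw [hN, edgeSet_sup, hH, edgeSet_deleteEdges, edgeSet_fromEdgeSet]
    congr 1
    ext e
    simp only [Set.mem_diff, Set.mem_singleton_iff, Set.mem_setOf_eq]
    constructor
    · exact fun h => h.1
    · rintro rfl
      exact ⟨rfl, by simp [Sym2.mk_isDiag_iff, hne]⟩
  have hconn : ∀ w, N.Reachable w a := by
    intro w
    obtain ⟨q⟩ := hT.isConnected.preconnected w x
    rcases reach_or_reach_of_walk (y := y) q with h1 | h1
    · exact Reachable.mono le_sup_left (h1.trans ha)
    · exact (Reachable.mono le_sup_left (h1.trans hb)).trans hNadj.symm.reachable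
  have hNconn : N.Connected := by
    have : Nonempty V := hT.isConnected.nonempty
    exact ⟨fun w₁ w₂ => (hconn w₁).trans (hconn w₂).symm⟩
  have hNacyclic : N.IsAcyclic := by
    intro w c hc
    by_cases hmem : s(a, b) ∈ c.edges
    · have hbridge : N.IsBridge s(a, b) := by
        rw [isBridge_iff]
        refine fun hr => hnr (Reachable.mono ?_ hr)
        intro p q hpq
        rw [deleteEdges_adj] at hpq
        rcases hpq.1 with h | h
        · exact h
        · exact absurd h.1 hpq.2
      rw [isBridge_iff_adj_and_forall_cycle_notMem hNadj] at hbridge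
      exact hbridge c hc hmem
    · have hsub : ∀ e ∈ c.edges, e ∈ T.edgeSet := by
        intro e he
        have h1 := c.edges_subset_edgeSet he
        rw [hedgeSet] at h1
        rcases h1 with h1 | h1
        · exact h1.1
        · exact absurd (h1 ▸ he) hmem
      exact hT.2 (c.transfer T hsub) (hc.transfer hsub)
  exact ⟨⟨hNconn, hNacyclic⟩, hne, hnmem, hedgeSet⟩

lemma fromEdgeSet_singleton_le {u v : V} (huv : G.Adj u v) :
    SimpleGraph.fromEdgeSet {s(u, v)} ≤ G := by
  intro p q hpq
  rw [fromEdgeSet_adj _, Set.mem_singleton_iff] at hpq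
  exact G.mem_edgeSet.mp (hpq.1 ▸ G.mem_edgeSet.mpr huv)

lemma sum_exch [Fintype V] {M : Type*} [AddCommMonoid M] (f : Sym2 V → M) {E : Set (Sym2 V)}
    {d g : Sym2 V} (hd : d ∈ E) (hg : g ∉ E) :
    (∑ᶠ e ∈ (E \ {d}) ∪ {g}, f e) = (∑ᶠ e ∈ E \ {d}, f e) + f g ∧
    (∑ᶠ e ∈ E, f e) = (∑ᶠ e ∈ E \ {d}, f e) + f d := by
  constructor
  · rw [finsum_mem_union (Set.disjoint_singleton_right.mpr fun h => hg h.1)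
      (Set.toFinite _) (Set.toFinite _), finsum_mem_singleton]
  · conv_lhs => rw [← Set.diff_union_of_subset (Set.singleton_subset_iff.mpr hd)]
    rw [finsum_mem_union (Set.disjoint_singleton_right.mpr fun h => h.2 rfl)
      (Set.toFinite _) (Set.toFinite _), finsum_mem_singleton]

lemma weight_le_of_mem_path [Fintype V] {G T : SimpleGraph V} {W : Sym2 V → NNReal}
    (hTG : T ≤ G) (hT : T.IsTree)
    (hmin : ∀ T' : SimpleGraph V, T' ≤ G → T'.IsTree →
      ∑ᶠ e ∈ T.edgeSet, W e ≤ ∑ᶠ e ∈ T'.edgeSet, W e)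
    {u v : V} (huv : G.Adj u v) (hnT : s(u, v) ∉ T.edgeSet)
    {p : T.Walk u v} (hp : p.IsPath) {x y : V} (hg : s(x, y) ∈ p.edges) :
    W s(x, y) ≤ W s(u, v) := by
  have hxy : T.Adj x y := T.mem_edgeSet.mp (p.edges_subset_edgeSet hg)
  have hnr := not_reachable_deleteEdges_of_mem_path_edges hT.2 hp hg
  obtain ⟨qu⟩ := hT.isConnected.preconnected u x
  obtain ⟨qv⟩ := hT.isConnected.preconnected v x
  have hswap : s(y, x) = s(x, y) := Sym2.eq_swap
  rcases reach_or_reach_of_walk (y := y) qu with h1 | h1 <;>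
    rcases reach_or_reach_of_walk (y := y) qv with h2 | h2
  · exact absurd (h1.trans h2.symm) hnr
  · -- u ~ x, v ~ y
    obtain ⟨htree, -, -, hedge⟩ := replacement hT hxy h1.symm h2.symm
    have hNle : T.deleteEdges {s(x, y)} ⊔ SimpleGraph.fromEdgeSet {s(u, v)} ≤ G :=
      sup_le (sdiff_le.trans hTG) (fromEdgeSet_singleton_le huv)
    have hmin' := hmin _ hNle htree
    obtain ⟨hA, hB⟩ := sum_exch (M := NNReal) W (T.mem_edgeSet.mpr hxy) hnT
    rw [hedge, hA, hB] at hmin'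
    exact le_of_add_le_add_left hmin'
  · -- u ~ y, v ~ x
    have h1' : (T.deleteEdges {s(y, x)}).Reachable y u := by rw [hswap]; exact h1.symm
    have h2' : (T.deleteEdges {s(y, x)}).Reachable x v := by rw [hswap]; exact h2.symm
    obtain ⟨htree, -, -, hedge⟩ := replacement hT hxy.symm h1' h2'
    rw [hswap] at htree hedge
    have hNle : T.deleteEdges {s(x, y)} ⊔ SimpleGraph.fromEdgeSet {s(u, v)} ≤ G :=
      sup_le (sdiff_le.trans hTG) (fromEdgeSet_singleton_le huv)
    have hmin' := hmin _ hNle htree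
    obtain ⟨hA, hB⟩ := sum_exch (M := NNReal) W (T.mem_edgeSet.mpr hxy) hnT
    rw [hedge, hA, hB] at hmin'
    exact le_of_add_le_add_left hmin'
  · exact absurd (h1.trans h2.symm) hnr

end Aux

/-- For a finite connected weighted graph `G` and `k ≥ 1`: a spanning
tree `T` of `G` minimizing the total weight `Σ_{e ∈ T} W(e)` also minimizes the total
weight `Σ_{e ∈ T} τ_k(e)` among all spanning trees of `G`. -/
theorem mst_for_kCluster_filtration [Fintype V] (G : SimpleGraph V) (W : Sym2 V → NNReal)
    (k : ℕ) (hk : 1 ≤ k) (hG : G.Connected)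
    (T : SimpleGraph V) (hTG : T ≤ G) (hT : T.IsTree)
    (hmin : ∀ T' : SimpleGraph V, T' ≤ G → T'.IsTree →
      ∑ᶠ e ∈ T.edgeSet, W e ≤ ∑ᶠ e ∈ T'.edgeSet, W e) :
    ∀ T' : SimpleGraph V, T' ≤ G → T'.IsTree →
      ∑ᶠ e ∈ T.edgeSet, tauEdge G W k e ≤ ∑ᶠ e ∈ T'.edgeSet, tauEdge G W k e := by
  classical
  suffices key : ∀ n (T' : SimpleGraph V), T' ≤ G → T'.IsTree →
      (T'.edgeSet \ T.edgeSet).ncard = n →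
      ∑ᶠ e ∈ T.edgeSet, tauEdge G W k e ≤ ∑ᶠ e ∈ T'.edgeSet, tauEdge G W k e by
    exact fun T' h1 h2 => key _ T' h1 h2 rfl
  intro n
  induction n using Nat.strong_induction_on with
  | _ n ih =>
  intro T' hT'G hT' hcard
  rcases Nat.eq_zero_or_pos n with rfl | hpos
  · -- base case : T' = T
    have hempty : T'.edgeSet \ T.edgeSet = ∅ :=
      (Set.ncard_eq_zero (Set.toFinite _)).mp hcard
    have hsub : T'.edgeSet ⊆ T.edgeSet := Set.diff_eq_empty.mp hempty
    have hcards : T.edgeSet.ncard ≤ T'.edgeSet.ncard := by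
      have h1 := hT.card_edgeFinset
      have h2 := hT'.card_edgeFinset
      rw [Set.ncard_eq_toFinset_card', Set.ncard_eq_toFinset_card']
      have e1 : T.edgeSet.toFinset = T.edgeFinset := rfl
      have e2 : T'.edgeSet.toFinset = T'.edgeFinset := rfl
      rw [e1, e2]
      omega
    have : T' = T := edgeSet_inj.mp (Set.eq_of_subset_of_ncard_le hsub hcards (Set.toFinite _))
    rw [this]
  · -- inductive step
    have hne : (T'.edgeSet \ T.edgeSet).Nonempty := by
      rw [Set.nonempty_iff_ne_empty]
      intro h
      rw [h, Set.ncard_empty] at hcard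
      omega
    obtain ⟨e', he'⟩ := hne
    induction e' using Sym2.ind with
    | _ u v =>
    obtain ⟨h1', h2'⟩ := he'
    have huv' : T'.Adj u v := T'.mem_edgeSet.mp h1'
    have huvG : G.Adj u v := hT'G huv'
    obtain ⟨p, hp, -⟩ := hT.existsUnique_path u v
    set H' := T'.deleteEdges {s(u, v)} with hH'
    have hvnotS : ¬ H'.Reachable u v := by
      have hbr := isAcyclic_iff_forall_adj_isBridge.mp hT'.2 huv'
      rw [isBridge_iff] at hbr
      exact hbr
    obtain ⟨d, hd, haS, hbS⟩ := p.exists_boundary_dart {z | H'.Reachable u z}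
      (Reachable.refl u) hvnotS
    have hab : T.Adj d.toProd.1 d.toProd.2 := d.adj
    have hedge_mem : s(d.toProd.1, d.toProd.2) ∈ p.edges := List.mem_map_of_mem (f := Dart.edge) hd
    have heT : s(d.toProd.1, d.toProd.2) ∈ T.edgeSet := T.mem_edgeSet.mpr hab
    have heT' : s(d.toProd.1, d.toProd.2) ∉ T'.edgeSet := by
      intro hmem
      have hne2 : s(d.toProd.1, d.toProd.2) ≠ s(u, v) := fun h => h2' (h ▸ heT)
      have hadj : H'.Adj d.toProd.1 d.toProd.2 := by
        rw [hH', deleteEdges_adj]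
        exact ⟨T'.mem_edgeSet.mp hmem, by simpa using hne2⟩
      exact hbS (haS.trans hadj.reachable)
    have hbv : H'.Reachable v d.toProd.2 := by
      obtain ⟨q⟩ := hT'.isConnected.preconnected d.toProd.2 u
      rcases reach_or_reach_of_walk (y := v) q with h3 | h3
      · exact absurd h3.symm hbS
      · exact h3.symm
    obtain ⟨htree'', hne_ab, hnm, hedge''⟩ := replacement hT' huv' haS hbv
    set T'' := H' ⊔ SimpleGraph.fromEdgeSet {s(d.toProd.1, d.toProd.2)} with hT''
    have hT''G : T'' ≤ G :=
      sup_le (sdiff_le.trans hT'G) (fromEdgeSet_singleton_le (hTG hab))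
    have hm : (T''.edgeSet \ T.edgeSet).ncard = n - 1 := by
      rw [hedge'']
      have hsets : ((T'.edgeSet \ {s(u, v)}) ∪ {s(d.toProd.1, d.toProd.2)}) \ T.edgeSet
          = (T'.edgeSet \ T.edgeSet) \ {s(u, v)} := by
        ext e
        simp only [Set.mem_diff, Set.mem_union, Set.mem_singleton_iff]
        constructor
        · rintro ⟨h | rfl, hnT⟩
          · exact ⟨⟨h.1, hnT⟩, h.2⟩
          · exact absurd heT hnT
        · rintro ⟨⟨he1, he2⟩, he3⟩
          exact ⟨Or.inl ⟨he1, he3⟩, he2⟩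
      rw [hsets, Set.ncard_diff_singleton_of_mem ((Set.mem_diff _).mpr ⟨h1', h2'⟩), hcard]
    have hIH := ih (n - 1) (by omega) T'' hT''G htree'' hm
    -- comparing f on the exchanged edge
    have hWp : ∀ g ∈ p.edges, (W g : ℝ≥0∞) ≤ (W s(u, v) : ℝ≥0∞) := by
      intro g hgm
      induction g using Sym2.ind with
      | _ x y =>
        exact ENNReal.coe_le_coe.mpr (weight_le_of_mem_path hTG hT hmin huvG h2' hp hgm)
    have haSup : d.toProd.1 ∈ p.support := Walk.dart_fst_mem_support_of_mem_darts p hd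
    have hbSup : d.toProd.2 ∈ p.support := Walk.dart_snd_mem_support_of_mem_darts p hd
    have hta : tauV G W k d.toProd.1 ≤ tauV G W k u ⊔ (W s(u, v) : ℝ≥0∞) :=
      tauV_le_of_walk hTG (p.takeUntil _ haSup)
        (fun g hg => hWp g (Walk.edges_takeUntil_subset _ _ hg))
    have htb : tauV G W k d.toProd.2 ≤ tauV G W k u ⊔ (W s(u, v) : ℝ≥0∞) :=
      tauV_le_of_walk hTG (p.takeUntil _ hbSup)
        (fun g hg => hWp g (Walk.edges_takeUntil_subset _ _ hg))
    have hfle : tauEdge G W k s(d.toProd.1, d.toProd.2) ≤ tauEdge G W k s(u, v) := by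
      rw [tauEdge_mk, tauEdge_mk]
      have hWuv : (W s(u, v) : ℝ≥0∞) ≤ (tauV G W k u ⊔ tauV G W k v) ⊔ (W s(u, v) : ℝ≥0∞) :=
        le_sup_right
      have htu : tauV G W k u ⊔ (W s(u, v) : ℝ≥0∞)
          ≤ (tauV G W k u ⊔ tauV G W k v) ⊔ (W s(u, v) : ℝ≥0∞) :=
        sup_le (le_sup_left.trans le_sup_left) le_sup_right
      exact sup_le (sup_le (hta.trans htu) (htb.trans htu)) ((hWp _ hedge_mem).trans hWuv)
    obtain ⟨hA, hB⟩ := sum_exch (tauEdge G W k) h1' heT'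
    calc ∑ᶠ e ∈ T.edgeSet, tauEdge G W k e
        ≤ ∑ᶠ e ∈ T''.edgeSet, tauEdge G W k e := hIH
      _ = (∑ᶠ e ∈ T'.edgeSet \ {s(u, v)}, tauEdge G W k e)
          + tauEdge G W k s(d.toProd.1, d.toProd.2) := by rw [hedge'']; exact hA
      _ ≤ (∑ᶠ e ∈ T'.edgeSet \ {s(u, v)}, tauEdge G W k e) + tauEdge G W k s(u, v) :=
          add_le_add_right hfle _
      _ = ∑ᶠ e ∈ T'.edgeSet, tauEdge G W k e := hB.symm
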